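/- Let A ∈ ℝ^{n×m} and let Q ∈ ℝ^{n×ℓ} have orthonormal columns. If the truncated rank-k SVD of B = Q^T A is B_k, then ‖A − Q B_k‖₂ ≤ ‖A − Q Q^T A‖₂ + σ_{k+1}(A), where σ_{k+1}(A) is the (k+1)-st singular value of A. -/

import Mathlib

open Matrix

/-- Operator 2-norm (spectral norm) of a matrix. -/
noncomputable def opNorm2 {n m : ℕ} (A : Matrix (Fin n) (Fin m) ℝ) : ℝ :=
  ‖LinearMap.toContinuousLinearMap (Matrix.toEuclideanLin A)‖

/-- The (k+1)-st singular value of A, characterized (Eckart–Young) as the distance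
in spectral norm from A to the set of matrices of rank at most k. -/
noncomputable def singVal {n m : ℕ} (A : Matrix (Fin n) (Fin m) ℝ) (k : ℕ) : ℝ :=
  sInf ((fun Z : Matrix (Fin n) (Fin m) ℝ => opNorm2 (A - Z)) '' {Z | Z.rank ≤ k})

open RealInnerProductSpace in
lemma opNorm2_mul_le {n m ℓ : ℕ} (P : Matrix (Fin n) (Fin ℓ) ℝ) (M : Matrix (Fin ℓ) (Fin m) ℝ) :
    opNorm2 (P * M) ≤ opNorm2 P * opNorm2 M := by
  have h : LinearMap.toContinuousLinearMap (Matrix.toEuclideanLin (P * M)) =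
      (LinearMap.toContinuousLinearMap (Matrix.toEuclideanLin P)).comp
      (LinearMap.toContinuousLinearMap (Matrix.toEuclideanLin M)) := by
    ext x
    simp [Matrix.toEuclideanLin_apply, Matrix.mulVec_mulVec]
  rw [opNorm2, h]
  exact ContinuousLinearMap.opNorm_comp_le _ _

open RealInnerProductSpace in
lemma opNorm2_Q_le_one {n ℓ : ℕ} (Q : Matrix (Fin n) (Fin ℓ) ℝ) (hQ : Qᵀ * Q = 1) :
    opNorm2 Q ≤ 1 := by
  have hadj : Matrix.toEuclideanLin Qᵀ = LinearMap.adjoint (Matrix.toEuclideanLin Q) := by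
    have := Matrix.toEuclideanLin_conjTranspose_eq_adjoint Q
    simpa [Matrix.conjTranspose_eq_transpose_of_trivial] using this
  apply ContinuousLinearMap.opNorm_le_bound _ zero_le_one
  intro x
  have h2 : ⟪(Matrix.toEuclideanLin Q) x, (Matrix.toEuclideanLin Q) x⟫ = ⟪x, x⟫ := by
    rw [← LinearMap.adjoint_inner_left, ← hadj]
    have : Matrix.toEuclideanLin Qᵀ (Matrix.toEuclideanLin Q x)
        = Matrix.toEuclideanLin (Qᵀ * Q) x := by
      simp [Matrix.toEuclideanLin_apply, Matrix.mulVec_mulVec]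
    rw [this, hQ]
    simp [Matrix.toEuclideanLin_apply, Matrix.one_mulVec]
  rw [real_inner_self_eq_norm_mul_norm, real_inner_self_eq_norm_mul_norm] at h2
  have := (mul_self_inj (norm_nonneg _) (norm_nonneg _)).mp h2
  simpa using this.le

lemma opNorm2_Qt_le_one {n ℓ : ℕ} (Q : Matrix (Fin n) (Fin ℓ) ℝ) (hQ : Qᵀ * Q = 1) :
    opNorm2 Qᵀ ≤ 1 := by
  have hadj : Matrix.toEuclideanLin Qᵀ = LinearMap.adjoint (Matrix.toEuclideanLin Q) := by
    have := Matrix.toEuclideanLin_conjTranspose_eq_adjoint Q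
    simpa [Matrix.conjTranspose_eq_transpose_of_trivial] using this
  have : opNorm2 Qᵀ = opNorm2 Q := by
    rw [opNorm2, hadj, LinearMap.adjoint_toContinuousLinearMap]
    exact (ContinuousLinearMap.adjoint (E := EuclideanSpace ℝ (Fin ℓ))
      (F := EuclideanSpace ℝ (Fin n))).norm_map _
  rw [this]; exact opNorm2_Q_le_one Q hQ

lemma opNorm2_add_le {n m : ℕ} (X Y : Matrix (Fin n) (Fin m) ℝ) :
    opNorm2 (X + Y) ≤ opNorm2 X + opNorm2 Y := by
  have h : LinearMap.toContinuousLinearMap (Matrix.toEuclideanLin (X + Y)) =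
      LinearMap.toContinuousLinearMap (Matrix.toEuclideanLin X) +
      LinearMap.toContinuousLinearMap (Matrix.toEuclideanLin Y) := by
    ext x; simp [Matrix.toEuclideanLin_apply, Matrix.add_mulVec]
  rw [opNorm2, h]
  exact norm_add_le _ _

/-- Error bound for the truncated randomized SVD:
‖A − Q B_k‖₂ ≤ ‖A − Q Qᵀ A‖₂ + σ_{k+1}(A). -/
theorem randomized_svd_truncation_bound {n m ℓ k : ℕ} (hk : k ≤ ℓ)
    (A : Matrix (Fin n) (Fin m) ℝ) (Q : Matrix (Fin n) (Fin ℓ) ℝ)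
    (hQ : Qᵀ * Q = 1)
    (Bk : Matrix (Fin ℓ) (Fin m) ℝ) (hBkrank : Bk.rank ≤ k)
    (hBkbest : ∀ Z : Matrix (Fin ℓ) (Fin m) ℝ, Z.rank ≤ k →
      opNorm2 (Qᵀ * A - Bk) ≤ opNorm2 (Qᵀ * A - Z)) :
    opNorm2 (A - Q * Bk) ≤ opNorm2 (A - Q * Qᵀ * A) + singVal A k := by
  have hsplit : A - Q * Bk = (A - Q * Qᵀ * A) + Q * (Qᵀ * A - Bk) := by
    rw [Matrix.mul_sub, ← Matrix.mul_assoc]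
    abel
  have hkey : opNorm2 (Qᵀ * A - Bk) ≤ singVal A k := by
    apply le_csInf
    · exact ⟨opNorm2 (A - 0), ⟨0, by simp [Matrix.rank_zero], rfl⟩⟩
    · rintro b ⟨W, hW, rfl⟩
      have h1 : (Qᵀ * W).rank ≤ k := le_trans (Matrix.rank_mul_le_right _ _) hW
      refine le_trans (hBkbest _ h1) ?_
      have h2 : Qᵀ * A - Qᵀ * W = Qᵀ * (A - W) := by rw [Matrix.mul_sub]
      rw [h2]
      calc opNorm2 (Qᵀ * (A - W)) ≤ opNorm2 Qᵀ * opNorm2 (A - W) := opNorm2_mul_le _ _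
        _ ≤ 1 * opNorm2 (A - W) :=
            mul_le_mul_of_nonneg_right (opNorm2_Qt_le_one Q hQ) (norm_nonneg _)
        _ = opNorm2 (A - W) := one_mul _
  calc opNorm2 (A - Q * Bk)
      ≤ opNorm2 (A - Q * Qᵀ * A) + opNorm2 (Q * (Qᵀ * A - Bk)) := by
        rw [hsplit]; exact opNorm2_add_le _ _
    _ ≤ opNorm2 (A - Q * Qᵀ * A) + opNorm2 (Qᵀ * A - Bk) := by
        refine add_le_add_right ?_ _
        calc opNorm2 (Q * (Qᵀ * A - Bk)) ≤ opNorm2 Q * opNorm2 (Qᵀ * A - Bk) :=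
              opNorm2_mul_le _ _
          _ ≤ 1 * opNorm2 (Qᵀ * A - Bk) :=
              mul_le_mul_of_nonneg_right (opNorm2_Q_le_one Q hQ) (norm_nonneg _)
          _ = _ := one_mul _
    _ ≤ opNorm2 (A - Q * Qᵀ * A) + singVal A k := add_le_add_right hkey _
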